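/- arXiv:2010.00406 — 3 statements merged into one kernel-verified Lean document; each statement's English description precedes it below -/
import Mathlib

section
/- If the sequences generated by SGD with momentum (m_{k+1} = β_k m_k + g_k, x_{k+1} = x_k - α_k m_{k+1}) and by stochastic primal averaging (z_{k+1} = z_k - η_k g_k, x'_{k+1} = (1-c_{k+1}) x'_k + c_{k+1} z_{k+1}) are initialized with x_0 = x'_0 = z_0 and m_0 = 0, and if for all k ≥ 0 the hyper-parameters satisfy α_k = η_k c_{k+1} and η_{k+1} = (η_k - α_k)/β_{k+1}, then x_k = x'_k for all k ≥ 0. -/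
theorem sgdm_spa_equivalence {n : ℕ}
    (g m x z x' : ℕ → EuclideanSpace ℝ (Fin n))
    (α β η c : ℕ → ℝ)
    (hαpos : ∀ k, 0 < α k) (hβpos : ∀ k, 0 < β k)
    (hηpos : ∀ k, 0 < η k) (hcpos : ∀ k, 0 < c k)
    (hm0 : m 0 = 0) (hx0 : x 0 = x' 0) (hz0 : z 0 = x' 0)
    (hm : ∀ k, m (k + 1) = β k • m k + g k)
    (hx : ∀ k, x (k + 1) = x k - α k • m (k + 1))
    (hz : ∀ k, z (k + 1) = z k - η k • g k)
    (hx' : ∀ k, x' (k + 1) = (1 - c (k + 1)) • x' k + c (k + 1) • z (k + 1))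
    (hα : ∀ k, α k = η k * c (k + 1))
    (hη : ∀ k, η (k + 1) = (η k - α k) / β (k + 1)) :
    ∀ k, x k = x' k := by
  have H : ∀ k, x k = x' k ∧ z k = x k - (η k * β k) • m k := by
    intro k
    induction k with
    | zero =>
      refine ⟨hx0, ?_⟩
      rw [hm0, hz0, hx0]
      simp
    | succ k ih =>
      obtain ⟨h1, h2⟩ := ih
      have hβne : β (k + 1) ≠ 0 := (hβpos (k + 1)).ne'
      have key : η (k + 1) * β (k + 1) = η k - α k := by
        rw [hη]; field_simp
      constructor
      · rw [hx, hx', hz, hm, hα k, ← h1, h2]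
        module
      · rw [hz, hx, hm, key, h2]
        module
  exact fun k => (H k).1
end

section
/- Suppose f : R^n → R is differentiable with L-Lipschitz gradient. For the SPA iteration, with g_k = ∇f(x_k) the exact gradient, the following holds: (L/c_{k+1}²)‖x_{k+1}-x_k‖² ≤ L((1/c_k)-1+η_k L)((1/c_k)-1)‖x_k-x_{k-1}‖² + η_k² L ‖g_k‖² + 2η_k L ((1/c_k)-1)(f(x_{k-1}) - f(x_k)). -/
open InnerProductSpace

private lemma descent_upper {n : ℕ} (f : EuclideanSpace ℝ (Fin n) → ℝ)
    (f' : EuclideanSpace ℝ (Fin n) → EuclideanSpace ℝ (Fin n)) (L : ℝ)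
    (hgrad : ∀ x, HasGradientAt f (f' x) x)
    (hLip : ∀ x y, ‖f' x - f' y‖ ≤ L * ‖x - y‖)
    (x y : EuclideanSpace ℝ (Fin n)) :
    f y ≤ f x + ⟪f' x, y - x⟫_ℝ + L / 2 * ‖y - x‖ ^ 2 := by
  set d := y - x with hd
  have hφ : ∀ t : ℝ, HasDerivAt (fun t : ℝ => f (x + t • d)) (⟪f' (x + t • d), d⟫_ℝ) t := by
    intro t
    have h1 : HasDerivAt (fun t : ℝ => x + t • d) d t := by
      simpa using ((hasDerivAt_id t).smul_const d).const_add x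
    have h2 := (hgrad (x + t • d)).hasFDerivAt.comp_hasDerivAt t h1
    exact h2
  set g : ℝ → ℝ := fun t => f (x + t • d) - t * ⟪f' x, d⟫_ℝ - L / 2 * t ^ 2 * ‖d‖ ^ 2 with hg
  have hg' : ∀ t : ℝ, HasDerivAt g (⟪f' (x + t • d), d⟫_ℝ - ⟪f' x, d⟫_ℝ - L * t * ‖d‖ ^ 2) t := by
    intro t
    have hlin : HasDerivAt (fun t : ℝ => t * ⟪f' x, d⟫_ℝ) (⟪f' x, d⟫_ℝ) t := by
      simpa using (hasDerivAt_id t).mul_const (⟪f' x, d⟫_ℝ)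
    have hquad : HasDerivAt (fun t : ℝ => L / 2 * t ^ 2 * ‖d‖ ^ 2) (L * t * ‖d‖ ^ 2) t := by
      have := ((hasDerivAt_pow 2 t).const_mul (L / 2)).mul_const (‖d‖ ^ 2)
      refine this.congr_deriv ?_
      push_cast; ring
    exact ((hφ t).sub hlin).sub hquad
  have hderiv_nonpos : ∀ t ∈ interior (Set.Icc (0:ℝ) 1), deriv g t ≤ 0 := by
    intro t ht
    rw [interior_Icc] at ht
    have ht0 : (0:ℝ) < t := ht.1
    rw [(hg' t).deriv]
    have h1 : ⟪f' (x + t • d) - f' x, d⟫_ℝ ≤ ‖f' (x + t • d) - f' x‖ * ‖d‖ :=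
      real_inner_le_norm _ _
    have h2 : ‖f' (x + t • d) - f' x‖ ≤ L * (t * ‖d‖) := by
      have := hLip (x + t • d) x
      simpa [norm_smul, abs_of_pos ht0] using this
    have h3 : ⟪f' (x + t • d), d⟫_ℝ - ⟪f' x, d⟫_ℝ = ⟪f' (x + t • d) - f' x, d⟫_ℝ := by
      rw [inner_sub_left]
    have hdn : (0:ℝ) ≤ ‖d‖ := norm_nonneg _
    nlinarith [h1, h2, mul_le_mul_of_nonneg_right h2 hdn]
  have hanti : AntitoneOn g (Set.Icc (0:ℝ) 1) := by
    apply antitoneOn_of_deriv_nonpos (convex_Icc 0 1)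
    · exact (fun t _ => ((hg' t).differentiableAt).continuousAt.continuousWithinAt)
    · exact fun t ht => ((hg' t).differentiableAt).differentiableWithinAt
    · exact hderiv_nonpos
  have := hanti (Set.left_mem_Icc.2 zero_le_one) (Set.right_mem_Icc.2 zero_le_one) zero_le_one
  simp only [hg] at this
  have e1 : x + (1:ℝ) • d = y := by simp [hd]
  have e0 : x + (0:ℝ) • d = x := by simp
  rw [e0, e1] at this
  nlinarith [this]

theorem spa_xdiff_step {n : ℕ} (f : EuclideanSpace ℝ (Fin n) → ℝ)
    (f' : EuclideanSpace ℝ (Fin n) → EuclideanSpace ℝ (Fin n))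
    (L : ℝ)
    (hgrad : ∀ x, HasGradientAt f (f' x) x)
    (hLip : ∀ x y, ‖f' x - f' y‖ ≤ L * ‖x - y‖)
    (c_k c_k1 η_k : ℝ) (hck0 : 0 < c_k) (hck1 : c_k ≤ 1)
    (hck10 : 0 < c_k1) (hck11 : c_k1 ≤ 1) (hη : 0 < η_k)
    (x_km1 x_k : EuclideanSpace ℝ (Fin n)) :
    let z_k := x_k + (1 / c_k - 1) • (x_k - x_km1)
    let z_k1 := z_k - η_k • f' x_k
    let x_k1 := (1 - c_k1) • x_k + c_k1 • z_k1
    (L / c_k1 ^ 2) * ‖x_k1 - x_k‖ ^ 2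
      ≤ L * (1 / c_k - 1 + η_k * L) * (1 / c_k - 1) * ‖x_k - x_km1‖ ^ 2
        + η_k ^ 2 * L * ‖f' x_k‖ ^ 2
        + 2 * η_k * L * (1 / c_k - 1) * (f x_km1 - f x_k) := by
  intro z_k z_k1 x_k1
  by_cases hL : 0 ≤ L
  case neg =>
    push_neg at hL
    have hzero : ∀ v : EuclideanSpace ℝ (Fin n), v = 0 := by
      intro v
      by_contra hv
      have h1 : 0 < ‖v - 0‖ := by simpa [sub_zero] using norm_pos_iff.2 hv
      have := hLip v 0
      nlinarith [norm_nonneg (f' v - f' 0)]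
    have h1 : x_km1 = x_k := by rw [hzero x_km1, hzero x_k]
    have h2 : x_k1 - x_k = 0 := by rw [hzero (x_k1 - x_k)]
    have h3 : f' x_k = 0 := hzero _
    rw [h1, h2, h3]
    simp
  case pos =>
    set A := 1 / c_k - 1 with hA
    have hA0 : 0 ≤ A := by
      have := one_le_one_div hck0 hck1
      rw [hA]; linarith
    set d := x_k - x_km1 with hd
    set gv := f' x_k with hgv
    have hx : x_k1 - x_k = c_k1 • (A • d - η_k • gv) := by
      simp only [x_k1, z_k1, z_k, hA, hd, hgv]
      module
    have hnorm : ‖x_k1 - x_k‖ ^ 2 = c_k1 ^ 2 * ‖A • d - η_k • gv‖ ^ 2 := by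
      rw [hx, norm_smul, Real.norm_eq_abs, abs_of_pos hck10, mul_pow]
    have hexp : ‖A • d - η_k • gv‖ ^ 2
        = A ^ 2 * ‖d‖ ^ 2 - 2 * (A * η_k) * ⟪d, gv⟫_ℝ + η_k ^ 2 * ‖gv‖ ^ 2 := by
      rw [norm_sub_sq_real, real_inner_smul_left, real_inner_smul_right, norm_smul, norm_smul,
        Real.norm_eq_abs, Real.norm_eq_abs, abs_of_nonneg hA0, abs_of_pos hη]
      ring
    -- descent lemma applied to -f
    have hgradneg : ∀ v, HasGradientAt (fun w => -f w) (-f' v) v := by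
      intro v
      have h := (hgrad v).hasFDerivAt.neg
      have : HasFDerivAt (fun w => -f w) (toDual ℝ _ (-f' v)) v := by
        rw [map_neg]; exact h
      have h2 := this.hasGradientAt
      rwa [LinearIsometryEquiv.symm_apply_apply] at h2
    have hLipneg : ∀ x y, ‖(-f' x) - (-f' y)‖ ≤ L * ‖x - y‖ := by
      intro x y
      rw [show (-f' x) - (-f' y) = f' y - f' x by abel, show ‖x - y‖ = ‖y - x‖ from
        (norm_sub_rev x y)]
      exact hLip y x
    have key := descent_upper (fun w => -f w) (fun w => -f' w) L hgradneg hLipneg x_k x_km1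
    have hinner : ⟪-gv, x_km1 - x_k⟫_ℝ = ⟪d, gv⟫_ℝ := by
      calc ⟪-gv, x_km1 - x_k⟫_ℝ = ⟪gv, x_k - x_km1⟫_ℝ := by
            rw [inner_neg_left, ← inner_neg_right, neg_sub]
        _ = ⟪d, gv⟫_ℝ := by rw [hd, real_inner_comm]
    have hnsym : ‖x_km1 - x_k‖ = ‖d‖ := by rw [hd, norm_sub_rev]
    rw [← hgv] at key
    rw [hinner, hnsym] at key
    -- key : -f x_km1 ≤ -f x_k + ⟪d, gv⟫_ℝ + L / 2 * ‖d‖ ^ 2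
    rw [hnorm, hexp]
    have hc2 : (c_k1:ℝ) ^ 2 ≠ 0 := by positivity
    have hLHS : L / c_k1 ^ 2 * (c_k1 ^ 2 *
        (A ^ 2 * ‖d‖ ^ 2 - 2 * (A * η_k) * ⟪d, gv⟫_ℝ + η_k ^ 2 * ‖gv‖ ^ 2))
        = L * (A ^ 2 * ‖d‖ ^ 2 - 2 * (A * η_k) * ⟪d, gv⟫_ℝ + η_k ^ 2 * ‖gv‖ ^ 2) := by
      field_simp
    rw [hLHS]
    have hmul := mul_le_mul_of_nonneg_left key
      (by positivity : (0:ℝ) ≤ 2 * η_k * L * A)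
    set P := ⟪d, gv⟫_ℝ with hP
    set D := ‖d‖ ^ 2 with hD
    set G := ‖gv‖ ^ 2 with hG
    clear_value A P D G
    nlinarith [hmul]
end

section
/- Suppose f : R^n → R is differentiable with L-Lipschitz gradient. For the SPA update z_{k+1} = z_k - η ∇f(x_k) with exact gradients, it holds that f(z_{k+1}) + (η/2)‖∇f(z_k)‖² ≤ f(z_k) - (η/2)‖∇f(x_k)‖² + (η/2)L²((1/c)-1)²‖x_k - x_{k-1}‖² + (η²L/2)‖∇f(x_k)‖². -/
open InnerProductSpace

lemma descent_lemma {n : ℕ} (f : EuclideanSpace ℝ (Fin n) → ℝ)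
    (f' : EuclideanSpace ℝ (Fin n) → EuclideanSpace ℝ (Fin n)) (L : ℝ)
    (hgrad : ∀ x, HasGradientAt f (f' x) x)
    (hLip : ∀ x y, ‖f' x - f' y‖ ≤ L * ‖x - y‖)
    (x v : EuclideanSpace ℝ (Fin n)) :
    f (x + v) ≤ f x + ⟪f' x, v⟫_ℝ + L / 2 * ‖v‖ ^ 2 := by
  set φ : ℝ → ℝ := fun t => f (x + t • v) - t * ⟪f' x, v⟫_ℝ - L * t ^ 2 / 2 * ‖v‖ ^ 2 with hφ
  have hderiv : ∀ t : ℝ, HasDerivAt φ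
      (⟪f' (x + t • v), v⟫_ℝ - ⟪f' x, v⟫_ℝ - L * t * ‖v‖ ^ 2) t := by
    intro t
    have hline : HasDerivAt (fun t : ℝ => x + t • v) v t := by
      simpa using ((hasDerivAt_id t).smul_const v).const_add x
    have h1 : HasDerivAt (fun t : ℝ => f (x + t • v)) (⟪f' (x + t • v), v⟫_ℝ) t := by
      have := (hgrad (x + t • v)).hasFDerivAt.comp_hasDerivAt t hline
      exact this
    have h2 : HasDerivAt (fun t : ℝ => t * ⟪f' x, v⟫_ℝ) (⟪f' x, v⟫_ℝ) t := by
      simpa using (hasDerivAt_id t).mul_const (⟪f' x, v⟫_ℝ)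
    have h3 : HasDerivAt (fun t : ℝ => L * t ^ 2 / 2 * ‖v‖ ^ 2) (L * t * ‖v‖ ^ 2) t := by
      have : HasDerivAt (fun t : ℝ => t ^ 2) (2 * t) t := by
        simpa using hasDerivAt_pow 2 t
      have := ((this.const_mul L).div_const 2).mul_const (‖v‖ ^ 2)
      exact this.congr_deriv (by ring)
    exact (h1.sub h2).sub h3
  have hanti : AntitoneOn φ (Set.Icc 0 1) := by
    apply antitoneOn_of_deriv_nonpos (convex_Icc 0 1)
    · exact fun t _ => (hderiv t).differentiableAt.continuousAt.continuousWithinAt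
    · intro t ht
      exact (hderiv t).differentiableAt.differentiableWithinAt
    · intro t ht
      rw [interior_Icc] at ht
      rw [(hderiv t).deriv]
      have hb : ⟪f' (x + t • v) - f' x, v⟫_ℝ ≤ ‖f' (x + t • v) - f' x‖ * ‖v‖ :=
        real_inner_le_norm _ _
      have hl : ‖f' (x + t • v) - f' x‖ ≤ L * (t * ‖v‖) := by
        have := hLip (x + t • v) x
        simpa [norm_smul, abs_of_nonneg ht.1.le] using this
      have hquad : ⟪f' (x + t • v), v⟫_ℝ - ⟪f' x, v⟫_ℝ ≤ L * t * ‖v‖ ^ 2 := by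
        rw [← inner_sub_left]
        calc ⟪f' (x + t • v) - f' x, v⟫_ℝ ≤ ‖f' (x + t • v) - f' x‖ * ‖v‖ := hb
        _ ≤ L * (t * ‖v‖) * ‖v‖ := by
            exact mul_le_mul_of_nonneg_right hl (norm_nonneg v)
        _ = L * t * ‖v‖ ^ 2 := by ring
      linarith
  have h01 := hanti (Set.mem_Icc.mpr ⟨le_refl 0, zero_le_one⟩)
    (Set.mem_Icc.mpr ⟨zero_le_one, le_refl 1⟩) zero_le_one
  simp only [hφ, one_smul, zero_smul, add_zero, one_pow, zero_pow, one_mul, zero_mul] at h01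
  nlinarith [h01]

theorem spa_f_update {n : ℕ} (f : EuclideanSpace ℝ (Fin n) → ℝ)
    (f' : EuclideanSpace ℝ (Fin n) → EuclideanSpace ℝ (Fin n))
    (L : ℝ)
    (hgrad : ∀ x, HasGradientAt f (f' x) x)
    (hLip : ∀ x y, ‖f' x - f' y‖ ≤ L * ‖x - y‖)
    (c η : ℝ) (hc0 : 0 < c) (hc1 : c ≤ 1) (hη : 0 < η)
    (x_km1 x_k : EuclideanSpace ℝ (Fin n)) :
    let z_k := x_k + (1 / c - 1) • (x_k - x_km1)
    let z_k1 := z_k - η • f' x_k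
    f z_k1 + (η / 2) * ‖f' z_k‖ ^ 2
      ≤ f z_k - (η / 2) * ‖f' x_k‖ ^ 2
        + (η / 2) * L ^ 2 * (1 / c - 1) ^ 2 * ‖x_k - x_km1‖ ^ 2
        + (η ^ 2 * L / 2) * ‖f' x_k‖ ^ 2 := by
  intro z_k z_k1
  have hcinv : (0:ℝ) ≤ 1 / c - 1 := by
    have : (1:ℝ) ≤ 1 / c := by rw [le_div_iff₀ hc0]; linarith
    linarith
  have key := descent_lemma f f' L hgrad hLip z_k (-(η • f' x_k))
  have hz1 : z_k1 = z_k + -(η • f' x_k) := by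
    simp [z_k1, sub_eq_add_neg]
  rw [← hz1] at key
  have hinner : ⟪f' z_k, -(η • f' x_k)⟫_ℝ = -(η * ⟪f' z_k, f' x_k⟫_ℝ) := by
    rw [inner_neg_right, real_inner_smul_right]
  have hnv : ‖-(η • f' x_k)‖ ^ 2 = η ^ 2 * ‖f' x_k‖ ^ 2 := by
    rw [norm_neg, norm_smul, Real.norm_eq_abs, abs_of_pos hη, mul_pow]
  rw [hinner, hnv] at key
  -- polarization
  have hpol : ‖f' z_k - f' x_k‖ ^ 2
      = ‖f' z_k‖ ^ 2 - 2 * ⟪f' z_k, f' x_k⟫_ℝ + ‖f' x_k‖ ^ 2 := by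
    have := @norm_sub_sq_real (EuclideanSpace ℝ (Fin n)) _ _ (f' z_k) (f' x_k)
    linarith [this]
  -- Lipschitz bound on the gradient gap
  have hzx : ‖z_k - x_k‖ = (1 / c - 1) * ‖x_k - x_km1‖ := by
    have : z_k - x_k = (1 / c - 1) • (x_k - x_km1) := by
      simp [z_k]
    rw [this, norm_smul, Real.norm_eq_abs, abs_of_nonneg hcinv]
  have hgap : ‖f' z_k - f' x_k‖ ≤ L * ((1 / c - 1) * ‖x_k - x_km1‖) := by
    have := hLip z_k x_k
    rwa [hzx] at this
  have hgap2 : ‖f' z_k - f' x_k‖ ^ 2 ≤ L ^ 2 * (1 / c - 1) ^ 2 * ‖x_k - x_km1‖ ^ 2 := by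
    have h0 : (0:ℝ) ≤ ‖f' z_k - f' x_k‖ := norm_nonneg _
    nlinarith [hgap, h0]
  nlinarith [key, hpol, hgap2, hη.le]
end
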